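/- Let N be a positive integer, let C be an N×N complex positive semidefinite matrix with C ≠ 0, let D be an N×N diagonal matrix with real diagonal entries, let λ > 0 be real, and let u ∈ ℂ^N have all coordinates nonzero. If D − λ·u uᴴ is positive semidefinite and D C = λ (u uᴴ) C, then D is invertible and C has rank one. -/

import Mathlib

open Matrix
open scoped ComplexOrder

/-- rank-one KKT argument. If `C ⪰ 0`, `C ≠ 0`, `D` is diagonal with real
entries, `λ > 0`, `u` has all coordinates nonzero, `D − λ u uᴴ ⪰ 0`, and
`D C = λ (u uᴴ) C`, then `D` is invertible and `C` has rank one. -/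
theorem sdr_rank_one (N : ℕ) (hN : 0 < N)
    (C : Matrix (Fin N) (Fin N) ℂ) (hC : C.PosSemidef) (hC0 : C ≠ 0)
    (d : Fin N → ℝ) (l : ℝ) (hl : 0 < l)
    (u : Fin N → ℂ) (hu : ∀ i, u i ≠ 0)
    (hM : (Matrix.diagonal (fun i => (d i : ℂ))
            - (l : ℂ) • Matrix.vecMulVec u (star u)).PosSemidef)
    (heq : Matrix.diagonal (fun i => (d i : ℂ)) * C
            = (l : ℂ) • (Matrix.vecMulVec u (star u) * C)) :
    IsUnit (Matrix.diagonal (fun i => (d i : ℂ))) ∧ C.rank = 1 := by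
  -- diagonal entries are positive
  have hd : ∀ i, 0 < d i := by
    intro i
    have h := hM.dotProduct_mulVec_nonneg (Pi.single i 1)
    have hval : star (Pi.single i 1 : Fin N → ℂ) ⬝ᵥ
        ((Matrix.diagonal (fun i => (d i : ℂ))
          - (l : ℂ) • Matrix.vecMulVec u (star u)) *ᵥ Pi.single i 1)
        = ((d i - l * Complex.normSq (u i) : ℝ) : ℂ) := by
      simp [sub_mulVec, Matrix.vecMulVec, mulVec, dotProduct, Pi.single_apply,
        Matrix.diagonal_apply, Complex.mul_conj, ← Complex.normSq_eq_conj_mul_self,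
        mul_comm]
    rw [hval] at h
    have h' : (0:ℝ) ≤ d i - l * Complex.normSq (u i) := by
      exact_mod_cast h
    have hpos : 0 < l * Complex.normSq (u i) :=
      mul_pos hl (Complex.normSq_pos.mpr (hu i))
    linarith
  have hdc : ∀ i, (d i : ℂ) ≠ 0 := fun i =>
    Complex.ofReal_ne_zero.mpr (ne_of_gt (hd i))
  have hunit : IsUnit (Matrix.diagonal (fun i => (d i : ℂ))) := by
    rw [Matrix.isUnit_iff_isUnit_det, Matrix.det_diagonal]
    exact isUnit_iff_ne_zero.mpr (Finset.prod_ne_zero_iff.mpr fun i _ => hdc i)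
  refine ⟨hunit, ?_⟩
  -- entrywise equation
  have hentry : ∀ i j, (d i : ℂ) * C i j
      = (l : ℂ) * (u i * ∑ k, star (u k) * C k j) := by
    intro i j
    have := congrFun (congrFun heq i) j
    simpa [Matrix.mul_apply, Matrix.diagonal_apply, Matrix.vecMulVec_apply,
      Finset.sum_ite_eq, Finset.mul_sum, mul_assoc] using this
  -- C is a rank-one outer product
  set v : Fin N → ℂ := fun i => (l : ℂ) * u i / (d i : ℂ) with hv
  set w : Fin N → ℂ := fun j => ∑ k, star (u k) * C k j with hw
  have hCvw : C = Matrix.vecMulVec v w := by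
    ext i j
    have h := hentry i j
    rw [Matrix.vecMulVec_apply, hv, hw]
    rw [div_mul_eq_mul_div, eq_div_iff (hdc i)]
    linear_combination h
  -- rank ≤ 1
  have hle : C.rank ≤ 1 := by
    rw [hCvw, Matrix.vecMulVec_eq Unit]
    calc (Matrix.replicateCol Unit v * Matrix.replicateRow Unit w).rank
        ≤ (Matrix.replicateCol Unit v).rank := Matrix.rank_mul_le_left _ _
      _ ≤ Fintype.card Unit := Matrix.rank_le_card_width _
      _ = 1 := by simp
  -- rank ≥ 1
  have hge : C.rank ≠ 0 := by
    intro h0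
    apply hC0
    have : Module.finrank ℂ (LinearMap.range C.mulVecLin) = 0 := h0
    rw [Submodule.finrank_eq_zero] at this
    have hker : ∀ x, C *ᵥ x = 0 := by
      intro x
      have hx : C.mulVecLin x ∈ LinearMap.range C.mulVecLin := LinearMap.mem_range_self _ x
      rw [this, Submodule.mem_bot] at hx
      simpa [Matrix.mulVecLin_apply] using hx
    ext i j
    have := congrFun (hker (Pi.single j 1)) i
    simpa [Matrix.mulVec_single] using this
  omega
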